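/- Let O be the ℂ-subalgebra of ℂ[[t]] that is the image of the substitution homomorphism ℂ[[x,y]] → ℂ[[t]] determined by x ↦ t⁴ and y ↦ t⁶ + t⁷, and let Γ = {ord(f) : f ∈ O, f ≠ 0}. Then there is no ideal J of O such that {ord(h) : h ∈ J, h ≠ 0} = (4 + Γ) ∪ (6 + Γ). -/

import Mathlib

set_option maxHeartbeats 1000000

/-- The order of a formal power series: the smallest `i` such that the coefficient
of `t^i` is nonzero (junk value `0` for the zero series). -/
noncomputable def ord (f : PowerSeries ℂ) : ℕ :=
  sInf {i : ℕ | PowerSeries.coeff i f ≠ 0}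

/-- The substitution homomorphism `ℂ[[x,y]] → ℂ[[t]]`, `x ↦ t⁴`, `y ↦ t⁶ + t⁷`,
described coefficientwise. -/
noncomputable def subst47 (P : MvPowerSeries (Fin 2) ℂ) : PowerSeries ℂ :=
  PowerSeries.mk fun n => ∑ᶠ d : Fin 2 →₀ ℕ,
    MvPowerSeries.coeff d P *
      PowerSeries.coeff n
        (((PowerSeries.X : PowerSeries ℂ) ^ 4) ^ (d 0) *
          ((PowerSeries.X : PowerSeries ℂ) ^ 6 + (PowerSeries.X : PowerSeries ℂ) ^ 7) ^ (d 1))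

/-- `O = ℂ[[t⁴, t⁶+t⁷]]`, the image of the substitution homomorphism. -/
noncomputable def Oimage : Set (PowerSeries ℂ) := Set.range subst47

open PowerSeries

/-! ### Order lemmas -/

lemma coeff_ord {f : ℂ⟦X⟧} (hf : f ≠ 0) : PowerSeries.coeff (ord f) f ≠ 0 := by
  have hne : {i : ℕ | PowerSeries.coeff i f ≠ 0}.Nonempty := by
    by_contra h
    rw [Set.not_nonempty_iff_eq_empty] at h
    apply hf
    ext n
    have : n ∉ {i : ℕ | PowerSeries.coeff i f ≠ 0} := by rw [h]; exact Set.notMem_empty n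
    simpa using this
  exact Nat.sInf_mem hne

lemma coeff_of_lt_ord {f : ℂ⟦X⟧} {i : ℕ} (h : i < ord f) : PowerSeries.coeff i f = 0 := by
  by_contra hc
  have := Nat.sInf_le (show i ∈ {i : ℕ | PowerSeries.coeff i f ≠ 0} from hc)
  rw [ord] at h
  omega

lemma ord_eq_of {f : ℂ⟦X⟧} {n : ℕ} (h1 : PowerSeries.coeff n f ≠ 0)
    (h2 : ∀ i < n, PowerSeries.coeff i f = 0) : ord f = n := by
  have ha : ord f ≤ n := Nat.sInf_le (show n ∈ {i : ℕ | PowerSeries.coeff i f ≠ 0} from h1)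
  have hb : ¬ ord f < n := fun hlt => coeff_ord (f := f)
    (fun h0 => h1 (by rw [h0]; simp)) (h2 _ hlt)
  omega

lemma ord_one : ord (1 : ℂ⟦X⟧) = 0 :=
  ord_eq_of (by simp) (by omega)

/-! ### Coefficients of products -/

lemma cmul_zero {f g : ℂ⟦X⟧} {m k n : ℕ} (hf : ∀ i < m, PowerSeries.coeff i f = 0)
    (hg : ∀ i < k, PowerSeries.coeff i g = 0) (hn : n < m + k) :
    PowerSeries.coeff n (f * g) = 0 := by
  rw [PowerSeries.coeff_mul]
  apply Finset.sum_eq_zero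
  rintro ⟨i, j⟩ hij
  rw [Finset.HasAntidiagonal.mem_antidiagonal] at hij
  rcases lt_or_ge i m with h | h
  · exact mul_eq_zero_of_left (hf i h) _
  · exact mul_eq_zero_of_right _ (hg j (by omega))

lemma cmul_top {f g : ℂ⟦X⟧} {m k : ℕ} (hf : ∀ i < m, PowerSeries.coeff i f = 0)
    (hg : ∀ i < k, PowerSeries.coeff i g = 0) :
    PowerSeries.coeff (m + k) (f * g) = PowerSeries.coeff m f * PowerSeries.coeff k g := by
  rw [PowerSeries.coeff_mul]
  apply Finset.sum_eq_single (m, k)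
  · rintro ⟨i, j⟩ hij hne
    rw [Finset.HasAntidiagonal.mem_antidiagonal] at hij
    rcases lt_or_ge i m with h | h
    · exact mul_eq_zero_of_left (hf i h) _
    · refine mul_eq_zero_of_right _ (hg j ?_)
      rcases Nat.lt_or_ge j k with h' | h'
      · exact h'
      · exfalso; apply hne; have : i = m := by omega
        subst this; simp at hij ⊢; omega
  · intro h; exact absurd (Finset.HasAntidiagonal.mem_antidiagonal.2 (rfl : m + k = m + k)) h

lemma cmul_succ {f g : ℂ⟦X⟧} {m k : ℕ} (hf : ∀ i < m, PowerSeries.coeff i f = 0)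
    (hg : ∀ i < k, PowerSeries.coeff i g = 0) :
    PowerSeries.coeff (m + k + 1) (f * g) =
      PowerSeries.coeff m f * PowerSeries.coeff (k+1) g
        + PowerSeries.coeff (m+1) f * PowerSeries.coeff k g := by
  rw [PowerSeries.coeff_mul]
  have hsub : ({(m, k+1), (m+1, k)} : Finset (ℕ × ℕ)) ⊆ Finset.HasAntidiagonal.antidiagonal (m+k+1) := by
    intro p hp
    simp at hp
    rcases hp with h | h <;> subst h <;> simp [Finset.HasAntidiagonal.mem_antidiagonal] <;> omega
  rw [← Finset.sum_subset hsub]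
  · rw [Finset.sum_pair (by simp)]
  · rintro ⟨i, j⟩ hij hne
    rw [Finset.HasAntidiagonal.mem_antidiagonal] at hij
    simp at hne
    rcases lt_or_ge i m with h | h
    · exact mul_eq_zero_of_left (hf i h) _
    · refine mul_eq_zero_of_right _ (hg j ?_)
      omega

/-! ### Coefficients of elements of `Oimage` -/

lemma coeff_one_add_X_pow (j k : ℕ) :
    PowerSeries.coeff k ((1 + PowerSeries.X)^j) = (j.choose k : ℂ) := by
  rw [add_comm, add_pow]
  simp only [one_pow, mul_one, map_sum]
  have : ∀ m ∈ Finset.range (j+1),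
      PowerSeries.coeff k ((PowerSeries.X:ℂ⟦X⟧)^m * ((j.choose m : ℕ) : ℂ⟦X⟧)) =
        if k = m then (j.choose m : ℂ) else 0 := by
    intro m _
    have : ((j.choose m : ℕ) : ℂ⟦X⟧) = PowerSeries.C ((j.choose m : ℕ) : ℂ) := by rfl
    rw [this, mul_comm, PowerSeries.coeff_C_mul, PowerSeries.coeff_X_pow]
    split_ifs <;> simp
  rw [Finset.sum_congr rfl this, Finset.sum_ite_eq]
  split_ifs with h
  · rfl
  · rw [Nat.choose_eq_zero_of_lt (by simpa using h), Nat.cast_zero]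

lemma w_eq (n i j : ℕ) :
    PowerSeries.coeff n (((PowerSeries.X:ℂ⟦X⟧)^4)^i
        * ((PowerSeries.X:ℂ⟦X⟧)^6 + (PowerSeries.X:ℂ⟦X⟧)^7)^j) =
      if 4*i+6*j ≤ n then (j.choose (n - (4*i+6*j)) : ℂ) else 0 := by
  have h1 : ((PowerSeries.X:ℂ⟦X⟧)^6 + (PowerSeries.X:ℂ⟦X⟧)^7)
      = (PowerSeries.X:ℂ⟦X⟧)^6 * (1 + PowerSeries.X) := by ring
  have h2 : ((PowerSeries.X:ℂ⟦X⟧)^4)^i * ((PowerSeries.X:ℂ⟦X⟧)^6 + (PowerSeries.X:ℂ⟦X⟧)^7)^j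
      = (PowerSeries.X:ℂ⟦X⟧)^(4*i+6*j) * (1 + PowerSeries.X)^j := by
    rw [h1, mul_pow, ← pow_mul, ← pow_mul, ← mul_assoc, ← pow_add]
  rw [h2, PowerSeries.coeff_X_pow_mul']
  split_ifs with h
  · rw [coeff_one_add_X_pow]
  · rfl

lemma coeff_subst47 (P : MvPowerSeries (Fin 2) ℂ) (n : ℕ) :
    PowerSeries.coeff n (subst47 P) = ∑ᶠ d : Fin 2 →₀ ℕ,
      MvPowerSeries.coeff d P *
        (if 4*(d 0)+6*(d 1) ≤ n then ((d 1).choose (n - (4*(d 0)+6*(d 1))) : ℂ) else 0) := by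
  rw [subst47, PowerSeries.coeff_mk]
  exact finsum_congr fun d => by rw [w_eq]

lemma coeff5_eq_zero {f : ℂ⟦X⟧} (hf : f ∈ Oimage) : PowerSeries.coeff 5 f = 0 := by
  obtain ⟨P, rfl⟩ := hf
  rw [coeff_subst47]
  refine finsum_eq_zero_of_forall_eq_zero fun d => ?_
  rcases Nat.lt_or_ge (4*(d 0)+6*(d 1)) 6 with h | h
  · have : (d 0 = 0 ∧ d 1 = 0) ∨ (d 0 = 1 ∧ d 1 = 0) := by omega
    rcases this with ⟨h1,h2⟩ | ⟨h1,h2⟩ <;> rw [if_pos (by omega), h1, h2] <;> norm_num [Nat.choose]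
  · rw [if_neg (by omega), mul_zero]

lemma coeff9_eq_zero {f : ℂ⟦X⟧} (hf : f ∈ Oimage) : PowerSeries.coeff 9 f = 0 := by
  obtain ⟨P, rfl⟩ := hf
  rw [coeff_subst47]
  refine finsum_eq_zero_of_forall_eq_zero fun d => ?_
  rcases Nat.lt_or_ge (4*(d 0)+6*(d 1)) 10 with h | h
  · have : (d 0 = 0 ∧ d 1 = 0) ∨ (d 0 = 1 ∧ d 1 = 0) ∨ (d 0 = 2 ∧ d 1 = 0) ∨ (d 0 = 0 ∧ d 1 = 1) := by
      omega
    rcases this with ⟨h1,h2⟩ | ⟨h1,h2⟩ | ⟨h1,h2⟩ | ⟨h1,h2⟩ <;> rw [if_pos (by omega), h1, h2] <;>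
      norm_num [Nat.choose]
  · rw [if_neg (by omega), mul_zero]

lemma coeff7_eq_coeff6 {f : ℂ⟦X⟧} (hf : f ∈ Oimage) :
    PowerSeries.coeff 7 f = PowerSeries.coeff 6 f := by
  obtain ⟨P, rfl⟩ := hf
  rw [coeff_subst47, coeff_subst47]
  refine finsum_congr fun d => ?_
  congr 1
  rcases Nat.lt_or_ge (4*(d 0)+6*(d 1)) 8 with h | h
  · rw [if_pos (by omega), if_pos (by omega)]
    have : (d 0 = 0 ∧ d 1 = 0) ∨ (d 0 = 1 ∧ d 1 = 0) ∨ (d 0 = 0 ∧ d 1 = 1) := by omega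
    rcases this with ⟨h1,h2⟩ | ⟨h1,h2⟩ | ⟨h1,h2⟩ <;> rw [h1, h2] <;> norm_num [Nat.choose]
  · rw [if_neg (by omega), if_neg (by omega)]

lemma C_mem (z : ℂ) : (PowerSeries.C z) ∈ Oimage := by
  refine ⟨MvPowerSeries.C z, ?_⟩
  ext n
  rw [coeff_subst47]
  rw [finsum_eq_single _ (0 : Fin 2 →₀ ℕ) (fun d hd => by
    rw [MvPowerSeries.coeff_C, if_neg (by simpa using hd), zero_mul])]
  rcases Nat.eq_zero_or_pos n with h | h
  · subst h; simp
  · simp [MvPowerSeries.coeff_C, PowerSeries.coeff_C, Nat.choose_eq_zero_of_lt h, h.ne']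

lemma one_mem : (1 : ℂ⟦X⟧) ∈ Oimage := by
  have := C_mem 1
  rwa [map_one] at this

/-! ### Main theorem -/

/-- With `O = ℂ[[t⁴, t⁶+t⁷]]` and `Γ = {ord f : f ∈ O, f ≠ 0}`, there is no ideal `J`
of `O` (a subset of `O` containing `0`, closed under addition and under multiplication
by elements of `O`) whose set of orders of nonzero elements is `(4 + Γ) ∪ (6 + Γ)`. -/
theorem no_ideal_with_orders_four_six :
    ¬ ∃ J : Set (PowerSeries ℂ),
      J ⊆ Oimage ∧ (0 : PowerSeries ℂ) ∈ J ∧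
      (∀ a ∈ J, ∀ b ∈ J, a + b ∈ J) ∧
      (∀ a ∈ Oimage, ∀ b ∈ J, a * b ∈ J) ∧
      {n : ℕ | ∃ h ∈ J, h ≠ 0 ∧ n = ord h} =
        ((4 + ·) '' {n : ℕ | ∃ f ∈ Oimage, f ≠ 0 ∧ n = ord f}) ∪
          ((6 + ·) '' {n : ℕ | ∃ f ∈ Oimage, f ≠ 0 ∧ n = ord f}) := by
  rintro ⟨J, hJO, -, hadd, hmul, hset⟩
  -- pick h of order 4 and g of order 6 in J
  have h4mem : (4 : ℕ) ∈ {n : ℕ | ∃ h ∈ J, h ≠ 0 ∧ n = ord h} := by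
    rw [hset]
    exact Or.inl ⟨0, ⟨1, one_mem, one_ne_zero, ord_one.symm⟩, rfl⟩
  have h6mem : (6 : ℕ) ∈ {n : ℕ | ∃ h ∈ J, h ≠ 0 ∧ n = ord h} := by
    rw [hset]
    exact Or.inr ⟨0, ⟨1, one_mem, one_ne_zero, ord_one.symm⟩, rfl⟩
  obtain ⟨h, hhJ, hh0, hh4⟩ := h4mem
  obtain ⟨g, hgJ, hg0, hg6⟩ := h6mem
  set a := PowerSeries.coeff 4 h with ha_def
  set b := PowerSeries.coeff 6 g with hb_def
  have ha : a ≠ 0 := by rw [ha_def, hh4]; exact coeff_ord hh0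
  have hb : b ≠ 0 := by rw [hb_def, hg6]; exact coeff_ord hg0
  have hhz : ∀ i < 4, PowerSeries.coeff i h = 0 := fun i hi => coeff_of_lt_ord (by omega)
  have hgz : ∀ i < 6, PowerSeries.coeff i g = 0 := fun i hi => coeff_of_lt_ord (by omega)
  have hh5 : PowerSeries.coeff 5 h = 0 := coeff5_eq_zero (hJO hhJ)
  have hg7 : PowerSeries.coeff 7 g = b := by
    rw [hb_def]; exact coeff7_eq_coeff6 (hJO hgJ)
  -- the element e of order 13
  set G : ℂ⟦X⟧ := g * g with hG_def
  set H : ℂ⟦X⟧ := h * (h * h) with hH_def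
  set e : ℂ⟦X⟧ := PowerSeries.C (a^3) * G + PowerSeries.C (-(b^2)) * H with he_def
  have hGJ : G ∈ J := hmul g (hJO hgJ) g hgJ
  have hhhJ : h * h ∈ J := hmul h (hJO hhJ) h hhJ
  have hHJ : H ∈ J := hmul h (hJO hhJ) (h * h) hhhJ
  have heJ : e ∈ J := hadd _ (hmul _ (C_mem (a^3)) _ hGJ) _ (hmul _ (C_mem (-(b^2))) _ hHJ)
  -- coefficients of G
  have hGlt : ∀ i < 12, PowerSeries.coeff i G = 0 := fun i hi => cmul_zero hgz hgz (by omega)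
  have hG12 : PowerSeries.coeff 12 G = b * b := by
    have := cmul_top hgz hgz
    norm_num at this
    rw [hG_def, this, ← hb_def]
  have hG13 : PowerSeries.coeff 13 G = 2 * (b * b) := by
    have := cmul_succ hgz hgz
    norm_num at this
    rw [hG_def, this, hg7, ← hb_def]; ring
  -- coefficients of H
  have hz8 : ∀ i < 8, PowerSeries.coeff i (h * h) = 0 := fun i hi =>
    cmul_zero hhz hhz (by omega)
  have h88 : PowerSeries.coeff 8 (h * h) = a * a := by
    have := cmul_top hhz hhz
    norm_num at this
    rw [this, ← ha_def]
  have h99 : PowerSeries.coeff 9 (h * h) = 0 := by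
    have := cmul_succ hhz hhz
    norm_num at this
    rw [this, hh5]; ring
  have hHlt : ∀ i < 12, PowerSeries.coeff i H = 0 := fun i hi => cmul_zero hhz hz8 (by omega)
  have hH12 : PowerSeries.coeff 12 H = a * (a * a) := by
    have := cmul_top hhz hz8
    norm_num at this
    rw [hH_def, this, h88, ← ha_def]
  have hH13 : PowerSeries.coeff 13 H = 0 := by
    have := cmul_succ hhz hz8
    norm_num at this
    rw [hH_def, this, h99, hh5]; ring
  -- coefficients of e
  have hce : ∀ i : ℕ, PowerSeries.coeff i e =
      a^3 * PowerSeries.coeff i G + (-(b^2)) * PowerSeries.coeff i H := by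
    intro i
    rw [he_def, map_add, PowerSeries.coeff_C_mul, PowerSeries.coeff_C_mul]
  have he13 : PowerSeries.coeff 13 e ≠ 0 := by
    rw [hce, hG13, hH13]
    have : a^3 * (2*(b*b)) + (-(b^2)) * 0 = 2 * a^3 * b^2 := by ring
    rw [this]
    exact mul_ne_zero (mul_ne_zero two_ne_zero (pow_ne_zero _ ha)) (pow_ne_zero _ hb)
  have helt : ∀ i < 13, PowerSeries.coeff i e = 0 := by
    intro i hi
    rcases Nat.lt_or_ge i 12 with h' | h'
    · rw [hce, hGlt i h', hHlt i h']; ring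
    · have : i = 12 := by omega
      subst this
      rw [hce, hG12, hH12]; ring
  have he0 : e ≠ 0 := fun h0 => he13 (by rw [h0]; simp)
  have horde : ord e = 13 := ord_eq_of he13 helt
  -- 13 is in the value set of J, but not in the right-hand side
  have h13 : (13 : ℕ) ∈ {n : ℕ | ∃ h ∈ J, h ≠ 0 ∧ n = ord h} := ⟨e, heJ, he0, horde.symm⟩
  rw [hset] at h13
  rcases h13 with ⟨m, ⟨f, hfO, hf0, hm⟩, heq⟩ | ⟨m, ⟨f, hfO, hf0, hm⟩, heq⟩
  · -- 4 + m = 13, so ord f = 9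
    simp only at heq
    have hm9 : ord f = 9 := by omega
    exact coeff_ord hf0 (by rw [hm9]; exact coeff9_eq_zero hfO)
  · -- 6 + m = 13, so ord f = 7
    simp only at heq
    have hm7 : ord f = 7 := by omega
    have : PowerSeries.coeff 7 f ≠ 0 := by
      have := coeff_ord hf0; rwa [hm7] at this
    apply this
    rw [coeff7_eq_coeff6 hfO]
    exact coeff_of_lt_ord (by omega)
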